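/- Let g(w) = ρ₁w + ρ₂w², let ζ = ω' − E[ω'|x'], and suppose σ(z) ⊆ σ(x') and E[ζ² | z] = σ² a.s. for a constant σ². Then E[g(ω') | z] = E[g̃(E[ω'|x']) | z] a.s., where g̃(w) = g(w) + ρ₂σ². -/

import Mathlib

open MeasureTheory Filter
open scoped ENNReal

private lemma condexp_lin2 {Ω : Type*} {m m0 : MeasurableSpace Ω} {μ : Measure Ω}
    {f g : Ω → ℝ} (a b : ℝ)
    (hf : Integrable f μ) (hg : Integrable g μ) :
    μ[fun x => a * f x + b * g x|m] =ᵐ[μ] fun x => a * (μ[f|m]) x + b * (μ[g|m]) x := by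
  have h1 : (fun x => a * f x + b * g x) = (a • f) + (b • g) := by
    funext x; simp [smul_eq_mul]
  rw [h1]
  have h2 := condExp_add (m := m) (hf.smul a) (hg.smul b)
  have h3 := condExp_smul (m := m) (μ := μ) a f
  have h4 := condExp_smul (m := m) (μ := μ) b g
  filter_upwards [h2, h3, h4] with x hx2 hx3 hx4
  simp only [Pi.add_apply, Pi.smul_apply, smul_eq_mul] at *
  rw [hx2, hx3, hx4]

private lemma condexp_lin4 {Ω : Type*} {m m0 : MeasurableSpace Ω} {μ : Measure Ω}
    {f g h k : Ω → ℝ} (a b c d : ℝ)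
    (hf : Integrable f μ) (hg : Integrable g μ) (hh : Integrable h μ) (hk : Integrable k μ) :
    μ[fun x => a * f x + b * g x + c * h x + d * k x|m]
      =ᵐ[μ] fun x => a * (μ[f|m]) x + b * (μ[g|m]) x + c * (μ[h|m]) x + d * (μ[k|m]) x := by
  have hF1 : Integrable (fun x => a * f x + b * g x) μ := (hf.const_mul a).add (hg.const_mul b)
  have hF2 : Integrable (fun x => c * h x + d * k x) μ := (hh.const_mul c).add (hk.const_mul d)
  have key : (fun x => a * f x + b * g x + c * h x + d * k x)
      = (fun x => a * f x + b * g x) + (fun x => c * h x + d * k x) := by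
    funext x; simp only [Pi.add_apply]; ring
  rw [key]
  refine (condExp_add hF1 hF2 m).trans ?_
  have h2 := condexp_lin2 (m := m) a b hf hg
  have h3 := condexp_lin2 (m := m) c d hh hk
  filter_upwards [h2, h3] with x hx2 hx3
  simp only [Pi.add_apply]
  rw [hx2, hx3]; ring

/-- Conditional expectation of `f` given the sub-σ-algebra `m`, as a function. -/
noncomputable def ce {Ω : Type*} {m0 : MeasurableSpace Ω} (m : MeasurableSpace Ω)
    (μ : @Measure Ω m0) (f : Ω → ℝ) : Ω → ℝ := μ[f|m]

/-- Quadratic law of motion g(w) = ρ₁w + ρ₂w², ζ = ω' − E[ω'|x'], σ(z) ⊆ σ(x'),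
E[ζ²|z] = σ² a.s.: then E[g(ω')|z] = E[g̃(E[ω'|x'])|z] a.s. where g̃(w) = g(w) + ρ₂σ². -/
theorem stmt5 {Ω : Type*} [F : MeasurableSpace Ω] {μ : Measure Ω} [IsProbabilityMeasure μ]
    (mz mx : MeasurableSpace Ω) (hzx : mz ≤ mx) (hmx : mx ≤ F)
    (ω' : Ω → ℝ) (hω' : MemLp ω' 2 μ) (ρ₁ ρ₂ σ2 : ℝ)
    (hW2 : Integrable (fun a => (ce mx μ ω' a) ^ 2) μ)
    (hζ : ce mz μ (fun a => (ω' a - ce mx μ ω' a) ^ 2) =ᵐ[μ] fun _ => σ2) :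
    ce mz μ (fun a => ρ₁ * ω' a + ρ₂ * (ω' a) ^ 2)
      =ᵐ[μ] ce mz μ (fun a => (ρ₁ * ce mx μ ω' a + ρ₂ * (ce mx μ ω' a) ^ 2) + ρ₂ * σ2) := by
  simp only [ce] at *
  have hmz : mz ≤ F := hzx.trans hmx
  set W : Ω → ℝ := μ[ω'|mx] with hWdef
  have hWsm : StronglyMeasurable[mx] W := stronglyMeasurable_condExp
  have hWae : AEStronglyMeasurable[F] W μ := (hWsm.mono hmx).aestronglyMeasurable
  have hWmem : MemLp W 2 μ := (memLp_two_iff_integrable_sq hWae).mpr hW2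
  have hζmem : MemLp (fun a => ω' a - W a) 2 μ := hω'.sub hWmem
  have hω'int : Integrable ω' μ := hω'.integrable one_le_two
  have hWint : Integrable W μ := hWmem.integrable one_le_two
  have hζint : Integrable (fun a => ω' a - W a) μ := hζmem.integrable one_le_two
  have hζsq : Integrable (fun a => (ω' a - W a) ^ 2) μ := hζmem.integrable_sq
  have hWζ : Integrable (W * fun a => ω' a - W a) μ := by
    have := (hζmem.smul hWmem (r := 1)
      (hpqr := ⟨by norm_num [ENNReal.inv_two_add_inv_two]⟩)).integrable le_rfl
    exact this
  -- E[ζ | mx] = 0 a.e.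
  have hζx : μ[(fun a => ω' a - W a)|mx] =ᵐ[μ] 0 := by
    have h1 : μ[ω' - W|mx] =ᵐ[μ] μ[ω'|mx] - μ[W|mx] := condExp_sub (m := mx) hω'int hWint
    have h2 : μ[W|mx] = W := condExp_of_stronglyMeasurable hmx hWsm hWint
    have h3 : (fun a => ω' a - W a) = ω' - W := rfl
    rw [h3]
    filter_upwards [h1] with x hx
    rw [hx]
    simp [h2, ← hWdef]
  -- E[Wζ | mx] = 0 a.e., hence E[Wζ | mz] = 0 a.e.
  have hWζx : μ[W * fun a => ω' a - W a|mx] =ᵐ[μ] 0 := by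
    have h1 := condExp_mul_of_stronglyMeasurable_left hWsm hWζ hζint
    filter_upwards [h1, hζx] with x hx1 hx2
    simp only [Pi.mul_apply, Pi.zero_apply] at *
    rw [hx1, hx2, mul_zero]
  have hWζz : μ[W * fun a => ω' a - W a|mz] =ᵐ[μ] 0 := by
    have h1 := (condExp_condExp_of_le (f := W * fun a => ω' a - W a) (μ := μ) hzx hmx).symm
    have h2 : μ[μ[W * fun a => ω' a - W a|mx]|mz] =ᵐ[μ] μ[(0 : Ω → ℝ)|mz] :=
      condExp_congr_ae hWζx
    refine h1.trans (h2.trans ?_)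
    rw [condExp_zero]
  -- tower property for W
  have hWz : μ[W|mz] =ᵐ[μ] μ[ω'|mz] := condExp_condExp_of_le hzx hmx
  -- decompose the LHS
  have eLHS : (fun a => ρ₁ * ω' a + ρ₂ * (ω' a) ^ 2)
      = fun a => ρ₁ * ω' a + ρ₂ * (W a ^ 2)
          + (2 * ρ₂) * ((W * fun a => ω' a - W a) a) + ρ₂ * ((ω' a - W a) ^ 2) := by
    funext a
    simp only [Pi.mul_apply]
    ring
  have hL := condexp_lin4 (m := mz) ρ₁ ρ₂ (2 * ρ₂) ρ₂ hω'int hW2 hWζ hζsq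
  -- decompose the RHS
  have eRHS : (fun a => (ρ₁ * W a + ρ₂ * (W a) ^ 2) + ρ₂ * σ2)
      = fun a => ρ₁ * W a + ρ₂ * (W a ^ 2) + (ρ₂ * σ2) * ((fun _ => (1:ℝ)) a)
          + (0:ℝ) * ((fun _ => (1:ℝ)) a) := by
    funext a; simp
  have hR := condexp_lin4 (m := mz) ρ₁ ρ₂ (ρ₂ * σ2) 0 hWint hW2
    (integrable_const 1) (integrable_const 1)
  have hone : μ[(fun _ => (1:ℝ))|mz] = fun _ => (1:ℝ) := condExp_const hmz 1
  rw [eLHS, eRHS]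
  refine hL.trans (EventuallyEq.trans ?_ hR.symm)
  filter_upwards [hWζz, hζ, hWz] with x h1 h2 h3
  simp only [Pi.zero_apply] at h1
  simp only [hone]
  rw [h1, h2, h3]
  ring
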